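/- Let f : [a,b] → X be continuous, of bounded variation, and not constant on any subinterval of [a,b]. Let v_f(x) := V(f,[a,x]) and ℓ := v_f(b). If F := f ∘ v_f^{-1} : [0,ℓ] → X is C¹, then ‖F'(x)‖ = 1 for every x ∈ [0,ℓ]. -/

import Mathlib

open Set Topology Filter
open scoped NNReal ENNReal

/-- For a continuous BV function, the variation on `[x₀, t]` is small for `t` close to `x₀`
from the right. -/
lemma variation_right_small {X : Type*} [NormedAddCommGroup X] {a b : ℝ} {f : ℝ → X}
    (hf : ContinuousOn f (Icc a b)) (hBV : eVariationOn f (Icc a b) ≠ ⊤)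
    {x₀ : ℝ} (ha : a ≤ x₀) (hx₀b : x₀ < b) {ε : ℝ} (hε : 0 < ε) :
    ∃ t, x₀ < t ∧ t ≤ b ∧ eVariationOn f (Icc x₀ t) < ENNReal.ofReal ε := by
  set V := eVariationOn f (Icc x₀ b) with hVdef
  have hVt : V ≠ ⊤ := ne_top_of_le_ne_top hBV (eVariationOn.mono f (Icc_subset_Icc ha le_rfl))
  by_cases hsmall : V < ENNReal.ofReal ε
  · exact ⟨b, hx₀b, le_rfl, hsmall⟩
  push_neg at hsmall
  have hε4 : (0:ℝ) < ε/4 := by linarith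
  have hcont : ContinuousWithinAt f (Icc a b) x₀ := hf x₀ ⟨ha, hx₀b.le⟩
  obtain ⟨δ, hδpos, hδ⟩ := Metric.tendsto_nhdsWithin_nhds.mp hcont (ε/4) hε4
  have hV0 : V ≠ 0 := by
    intro h0
    rw [h0] at hsmall
    exact absurd (le_antisymm hsmall zero_le) (by simp [ENNReal.ofReal_eq_zero]; linarith)
  have hlt : V - ENNReal.ofReal (ε/4) < V :=
    ENNReal.sub_lt_self hVt hV0 (by simp [ENNReal.ofReal_eq_zero]; linarith)
  rw [hVdef, eVariationOn, lt_iSup_iff] at hlt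
  obtain ⟨⟨n, u', hu', us'⟩, hsum⟩ := hlt
  classical
  -- truncate the sequence at index n
  set u : ℕ → ℝ := fun i => u' (min i n) with hudef
  have hu : Monotone u := fun i j hij => hu' (min_le_min hij le_rfl)
  have us : ∀ i, u i ∈ Icc x₀ b := fun i => us' _
  have hsum : V - ENNReal.ofReal (ε/4) <
      ∑ i ∈ Finset.range n, edist (f (u (i+1))) (f (u i)) := by
    refine hsum.trans_le (le_of_eq (Finset.sum_congr rfl fun i hi => ?_))
    rw [Finset.mem_range] at hi
    rw [hudef]
    simp only [min_eq_left hi.le, min_eq_left (Nat.succ_le_of_lt hi)]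
  -- choose t
  set T : Finset ℝ := ((Finset.range (n+1)).image u).filter (fun v => x₀ < v) with hT
  set t₁ : ℝ := if h : T.Nonempty then T.min' h else b with ht₁
  set t : ℝ := min (min (x₀ + δ/2) b) t₁ with ht
  have hxt : x₀ < t := by
    refine lt_min (lt_min (by linarith) hx₀b) ?_
    rw [ht₁]
    split_ifs with h
    · exact (Finset.mem_filter.mp (T.min'_mem h)).2
    · exact hx₀b
  have htb : t ≤ b := le_trans (min_le_left _ _) (min_le_right _ _)
  have htI : t ∈ Icc a b := ⟨le_trans ha hxt.le, htb⟩
  have hft : edist (f t) (f x₀) < ENNReal.ofReal (ε/4) := by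
    have hd : dist t x₀ < δ := by
      rw [Real.dist_eq, abs_of_nonneg (by linarith)]
      have : t ≤ x₀ + δ/2 := le_trans (min_le_left _ _) (min_le_left _ _)
      linarith
    have := hδ htI hd
    rw [edist_dist]
    exact (ENNReal.ofReal_lt_ofReal_iff hε4).mpr this
  have hdich : ∀ i, u i ≤ x₀ ∨ t ≤ u i := by
    intro i
    rcases le_or_gt (u i) x₀ with h | h
    · exact Or.inl h
    · right
      have hmem : u i ∈ T := by
        refine Finset.mem_filter.mpr ⟨Finset.mem_image.mpr ⟨min i n,
          Finset.mem_range.mpr (by omega), ?_⟩, h⟩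
        show u' (min (min i n) n) = u' (min i n)
        rw [min_assoc, min_self]
      have hne : T.Nonempty := ⟨u i, hmem⟩
      calc t ≤ t₁ := min_le_right _ _
        _ ≤ u i := by rw [ht₁, dif_pos hne]; exact T.min'_le _ hmem
  have heq : ∀ i, u i ≤ x₀ → u i = x₀ := fun i h => le_antisymm h (us i).1
  -- the comparison partition in [t, b]
  set w : ℕ → ℝ := fun i => max (u i) t with hwdef
  have hw : Monotone w := fun i j hij => max_le_max (hu hij) le_rfl
  have hws : ∀ i, w i ∈ Icc t b := fun i => ⟨le_max_right _ _, max_le (us i).2 htb⟩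
  have hsumw : ∑ i ∈ Finset.range n, edist (f (w (i+1))) (f (w i)) ≤
      eVariationOn f (Icc t b) := eVariationOn.sum_le (f := f) (n := n) hw hws
  -- key estimate
  have hkey : ∑ i ∈ Finset.range n, edist (f (u (i+1))) (f (u i)) ≤
      (∑ i ∈ Finset.range n, edist (f (w (i+1))) (f (w i))) + ENNReal.ofReal (ε/4) := by
    by_cases hex : ∃ i ∈ Finset.range n, u i ≤ x₀ ∧ t ≤ u (i+1)
    · obtain ⟨i₀, hi₀n, hi₀l, hi₀r⟩ := hex
      have hterm : edist (f (u (i₀+1))) (f (u i₀)) ≤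
          edist (f (w (i₀+1))) (f (w i₀)) + ENNReal.ofReal (ε/4) := by
        have h1 : w i₀ = t := max_eq_right (hi₀l.trans hxt.le)
        have h2 : w (i₀+1) = u (i₀+1) := max_eq_left hi₀r
        rw [h1, h2, heq i₀ hi₀l]
        calc edist (f (u (i₀+1))) (f x₀) ≤
            edist (f (u (i₀+1))) (f t) + edist (f t) (f x₀) := edist_triangle _ _ _
          _ ≤ edist (f (u (i₀+1))) (f t) + ENNReal.ofReal (ε/4) := by
              exact add_le_add_right hft.le _
      have hrest : ∀ i ∈ (Finset.range n).erase i₀,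
          edist (f (u (i+1))) (f (u i)) ≤ edist (f (w (i+1))) (f (w i)) := by
        intro i hi
        have hne : i ≠ i₀ := (Finset.mem_erase.mp hi).1
        rcases hdich (i+1) with h | h
        · have h1 : u (i+1) = x₀ := heq _ h
          have h2 : u i = x₀ := heq _ ((hu (Nat.le_succ i)).trans h)
          rw [h1, h2, edist_self]
          exact zero_le
        · rcases hdich i with h' | h'
          · exfalso
            rcases hne.lt_or_gt with hlt' | hlt'
            · have : t ≤ u i₀ := h.trans (hu hlt')
              exact absurd (this.trans hi₀l) (not_le.mpr hxt)
            · have : t ≤ u i := hi₀r.trans (hu hlt')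
              exact absurd (this.trans h') (not_le.mpr hxt)
          · have h1 : w i = u i := max_eq_left h'
            have h2 : w (i+1) = u (i+1) := max_eq_left h
            rw [h1, h2]
      calc ∑ i ∈ Finset.range n, edist (f (u (i+1))) (f (u i))
          = (∑ i ∈ (Finset.range n).erase i₀, edist (f (u (i+1))) (f (u i))) +
            edist (f (u (i₀+1))) (f (u i₀)) := (Finset.sum_erase_add _ _ hi₀n).symm
        _ ≤ (∑ i ∈ (Finset.range n).erase i₀, edist (f (w (i+1))) (f (w i))) +
            (edist (f (w (i₀+1))) (f (w i₀)) + ENNReal.ofReal (ε/4)) :=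
            add_le_add (Finset.sum_le_sum hrest) hterm
        _ = ((∑ i ∈ (Finset.range n).erase i₀, edist (f (w (i+1))) (f (w i))) +
            edist (f (w (i₀+1))) (f (w i₀))) + ENNReal.ofReal (ε/4) := by ring
        _ = (∑ i ∈ Finset.range n, edist (f (w (i+1))) (f (w i))) + ENNReal.ofReal (ε/4) := by
            rw [Finset.sum_erase_add _ _ hi₀n]
    · push_neg at hex
      refine le_trans (Finset.sum_le_sum fun i hi => ?_) le_self_add
      rcases hdich (i+1) with h | h
      · have h1 : u (i+1) = x₀ := heq _ h
        have h2 : u i = x₀ := heq _ ((hu (Nat.le_succ i)).trans h)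
        rw [h1, h2, edist_self]
        exact zero_le
      · rcases hdich i with h' | h'
        · exact absurd h (not_le.mpr (hex i hi h'))
        · have h1 : w i = u i := max_eq_left h'
          have h2 : w (i+1) = u (i+1) := max_eq_left h
          rw [h1, h2]
  -- conclude
  have hVlt : V < eVariationOn f (Icc t b) + ENNReal.ofReal (ε/2) := by
    have h1 : V - ENNReal.ofReal (ε/4) < eVariationOn f (Icc t b) + ENNReal.ofReal (ε/4) :=
      hsum.trans_le (hkey.trans (add_le_add_left hsumw _))
    have h2 : V < eVariationOn f (Icc t b) + ENNReal.ofReal (ε/4) + ENNReal.ofReal (ε/4) := by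
      rcases le_or_gt V (ENNReal.ofReal (ε/4)) with h | h
      · refine h.trans_lt ?_
        have hlt0 : ENNReal.ofReal (ε/4) < ENNReal.ofReal (ε/4) + ENNReal.ofReal (ε/4) :=
          ENNReal.lt_add_right (by finiteness) (by simp [ENNReal.ofReal_eq_zero]; linarith)
        exact hlt0.trans_le (add_le_add_left le_add_self _)
      · rwa [ENNReal.sub_lt_iff_lt_right (by finiteness) h.le] at h1
    calc V < eVariationOn f (Icc t b) + ENNReal.ofReal (ε/4) + ENNReal.ofReal (ε/4) := h2
      _ = eVariationOn f (Icc t b) + ENNReal.ofReal (ε/2) := by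
          have he : ε/4 + ε/4 = ε/2 := by ring
          rw [add_assoc, ← ENNReal.ofReal_add (by linarith) (by linarith), he]
  have hadd : eVariationOn f (Icc x₀ t) + eVariationOn f (Icc t b) = V := by
    have := eVariationOn.Icc_add_Icc f (a := x₀) (b := t) (c := b) hxt.le htb
      (s := Icc x₀ b) ⟨hxt.le, htb⟩
    rwa [inter_eq_self_of_subset_right (Icc_subset_Icc le_rfl htb),
      inter_eq_self_of_subset_right (Icc_subset_Icc hxt.le le_rfl),
      inter_self] at this
  have hEt : eVariationOn f (Icc t b) ≠ ⊤ :=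
    ne_top_of_le_ne_top hBV (eVariationOn.mono f (Icc_subset_Icc htI.1 le_rfl))
  refine ⟨t, hxt, htb, ?_⟩
  have : eVariationOn f (Icc x₀ t) + eVariationOn f (Icc t b) <
      ENNReal.ofReal (ε/2) + eVariationOn f (Icc t b) := by
    rw [hadd]; rw [add_comm] at hVlt; exact hVlt
  have := (ENNReal.add_lt_add_iff_right hEt).mp this
  exact this.trans_le (ENNReal.ofReal_le_ofReal (by linarith))

/-- Mirror image of `variation_right_small`. -/
lemma variation_left_small {X : Type*} [NormedAddCommGroup X] {a b : ℝ} {f : ℝ → X}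
    (hf : ContinuousOn f (Icc a b)) (hBV : eVariationOn f (Icc a b) ≠ ⊤)
    {x₀ : ℝ} (hax : a < x₀) (hx₀b : x₀ ≤ b) {ε : ℝ} (hε : 0 < ε) :
    ∃ s, a ≤ s ∧ s < x₀ ∧ eVariationOn f (Icc s x₀) < ENNReal.ofReal ε := by
  -- apply the right-hand lemma to `f ∘ Neg.neg` on `[-b, -a]`
  have hneg : ∀ p q : ℝ, Neg.neg '' Icc p q = Icc (-q) (-p) := by
    intro p q
    rw [Set.image_neg_eq_neg, Set.neg_Icc]
  have hvar : ∀ p q : ℝ, eVariationOn (f ∘ Neg.neg) (Icc p q) = eVariationOn f (Icc (-q) (-p)) := by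
    intro p q
    rw [eVariationOn.comp_eq_of_antitoneOn f Neg.neg
      (fun x _ y _ hxy => neg_le_neg hxy), hneg]
  have hcont : ContinuousOn (f ∘ Neg.neg) (Icc (-b) (-a)) := by
    refine hf.comp continuousOn_neg ?_
    intro x hx
    exact ⟨by linarith [hx.2], by linarith [hx.1]⟩
  have hBV' : eVariationOn (f ∘ Neg.neg) (Icc (-b) (-a)) ≠ ⊤ := by
    rw [hvar]; simpa using hBV
  obtain ⟨t, ht1, ht2, ht3⟩ := variation_right_small hcont hBV'
    (x₀ := -x₀) (by simpa using hx₀b) (by simpa using hax) hε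
  refine ⟨-t, by linarith, by linarith, ?_⟩
  rw [hvar] at ht3
  simpa using ht3

/-- If `F` is `K`-Lipschitz on `[c,d]` and has derivative `v` within `[c,d]` at `y`,
then `‖v‖ ≤ K`. -/
lemma norm_deriv_le_of_lip {X : Type*} [NormedAddCommGroup X] [NormedSpace ℝ X]
    {c d K : ℝ} (hcd : c < d) {F : ℝ → X} {v : X} {y : ℝ} (hy : y ∈ Icc c d)
    (hd : HasDerivWithinAt F v (Icc c d) y)
    (hlip : ∀ p ∈ Icc c d, ∀ q ∈ Icc c d, ‖F p - F q‖ ≤ K * |p - q|) : ‖v‖ ≤ K := by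
  rw [hasDerivWithinAt_iff_tendsto_slope] at hd
  have hbound : ∀ z ∈ Icc c d, z ≠ y → ‖slope F y z‖ ≤ K := by
    intro z hz hne
    rw [slope_def_module, norm_smul, norm_inv, Real.norm_eq_abs]
    have h0 : |z - y| ≠ 0 := by
      simp only [ne_eq, abs_eq_zero, sub_eq_zero]
      exact hne
    calc |z - y|⁻¹ * ‖F z - F y‖ ≤ |z - y|⁻¹ * (K * |z - y|) := by
          apply mul_le_mul_of_nonneg_left (hlip z hz y hy) (by positivity)
      _ = K := by field_simp
  rcases lt_or_eq_of_le hy.2 with h | h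
  · have hne : (𝓝[Ioc y d] y).NeBot := by
      rw [nhdsWithin_Ioc_eq_nhdsGT h]
      infer_instance
    have hsub : Ioc y d ⊆ Icc c d \ {y} := fun z hz =>
      ⟨⟨hy.1.trans hz.1.le, hz.2⟩, ne_of_gt hz.1⟩
    have htend : Filter.Tendsto (fun z => ‖slope F y z‖) (𝓝[Ioc y d] y) (𝓝 ‖v‖) :=
      ((hd.mono_left (nhdsWithin_mono _ hsub)).norm)
    refine le_of_tendsto htend ?_
    filter_upwards [self_mem_nhdsWithin] with z hz
    exact hbound z ⟨hy.1.trans hz.1.le, hz.2⟩ (ne_of_gt hz.1)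
  · have hcy : c < y := h ▸ hcd
    have hne : (𝓝[Ico c y] y).NeBot := by
      rw [nhdsWithin_Ico_eq_nhdsLT hcy]
      infer_instance
    have hsub : Ico c y ⊆ Icc c d \ {y} := fun z hz =>
      ⟨⟨hz.1, hz.2.le.trans hy.2⟩, ne_of_lt hz.2⟩
    have htend : Filter.Tendsto (fun z => ‖slope F y z‖) (𝓝[Ico c y] y) (𝓝 ‖v‖) :=
      ((hd.mono_left (nhdsWithin_mono _ hsub)).norm)
    refine le_of_tendsto htend ?_
    filter_upwards [self_mem_nhdsWithin] with z hz
    exact hbound z ⟨hz.1, hz.2.le.trans hy.2⟩ (ne_of_lt hz.2)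

open MeasureTheory

/-- If `f : [a,b] → X` is continuous, BV and nonconstant on every subinterval,
and `F = f ∘ v_f⁻¹` (encoded by `F (v_f x) = f x`) is `C¹` on `[0, ℓ]`,
then `‖F'‖ = 1` on `[0, ℓ]`. -/
theorem stmt_8 {X : Type*} [NormedAddCommGroup X] [NormedSpace ℝ X]
    (a b : ℝ) (hab : a < b) (f : ℝ → X)
    (hf : ContinuousOn f (Set.Icc a b))
    (hBV : eVariationOn f (Set.Icc a b) ≠ ⊤)
    (hnc : ∀ c d, a ≤ c → c < d → d ≤ b → ¬ (∀ x ∈ Set.Icc c d, f x = f c))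
    (vf : ℝ → ℝ) (hvf : ∀ x ∈ Set.Icc a b, vf x = (eVariationOn f (Set.Icc a x)).toReal)
    (ℓ : ℝ) (hl : ℓ = vf b)
    (F F' : ℝ → X)
    (hF : ∀ x ∈ Set.Icc a b, F (vf x) = f x)
    (hF' : ∀ y ∈ Set.Icc 0 ℓ, HasDerivWithinAt F (F' y) (Set.Icc 0 ℓ) y)
    (hF'cont : ContinuousOn F' (Set.Icc 0 ℓ)) :
    ∀ y ∈ Set.Icc 0 ℓ, ‖F' y‖ = 1 := by
  have hfin : ∀ x z : ℝ, a ≤ x → z ≤ b → eVariationOn f (Icc x z) ≠ ⊤ := fun x z hx hz =>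
    ne_top_of_le_ne_top hBV (eVariationOn.mono f (Icc_subset_Icc hx hz))
  have hadd : ∀ x z : ℝ, a ≤ x → x ≤ z → z ≤ b →
      vf z = vf x + (eVariationOn f (Icc x z)).toReal := by
    intro x z hax hxz hzb
    rw [hvf x ⟨hax, hxz.trans hzb⟩, hvf z ⟨hax.trans hxz, hzb⟩]
    have h := eVariationOn.Icc_add_Icc f (a := a) (b := x) (c := z) hax hxz
      (s := Icc a z) ⟨hax, hxz⟩
    rw [inter_eq_self_of_subset_right (Icc_subset_Icc le_rfl hxz),
      inter_eq_self_of_subset_right (Icc_subset_Icc hax le_rfl), inter_self] at h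
    rw [← h, ENNReal.toReal_add (hfin a x le_rfl (hxz.trans hzb)) (hfin x z hax hzb)]
  have vf0 : vf a = 0 := by
    rw [hvf a ⟨le_rfl, hab.le⟩, Icc_self,
      eVariationOn.subsingleton f subsingleton_singleton, ENNReal.toReal_zero]
  have vmono : ∀ x z, a ≤ x → x ≤ z → z ≤ b → vf x ≤ vf z := by
    intro x z h1 h2 h3
    rw [hadd x z h1 h2 h3]
    exact le_add_of_nonneg_right ENNReal.toReal_nonneg
  have vnonneg : ∀ x ∈ Icc a b, 0 ≤ vf x := fun x hx => by
    have := vmono a x le_rfl hx.1 hx.2; rwa [vf0] at this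
  have vle : ∀ x ∈ Icc a b, vf x ≤ ℓ := fun x hx => by
    rw [hl]; exact vmono x b hx.1 hx.2 le_rfl
  have hvar_ne : ∀ x z, a ≤ x → x < z → z ≤ b → eVariationOn f (Icc x z) ≠ 0 := by
    intro x z h1 h2 h3 h0
    refine hnc x z h1 h2 h3 fun p hp => ?_
    rw [eVariationOn.eq_zero_iff] at h0
    exact edist_eq_zero.mp (h0 p hp x (left_mem_Icc.mpr h2.le))
  have vstrict : ∀ x z, a ≤ x → x < z → z ≤ b → vf x < vf z := by
    intro x z h1 h2 h3
    rw [hadd x z h1 h2.le h3]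
    have := ENNReal.toReal_pos (hvar_ne x z h1 h2 h3) (hfin x z h1 h3)
    linarith
  have hℓpos : 0 < ℓ := by
    have := vstrict a b le_rfl hab le_rfl
    rw [vf0] at this; rw [hl]; exact this
  -- surjectivity of vf onto [0, ℓ]
  have hsurj : ∀ y ∈ Icc 0 ℓ, ∃ c, c ∈ Icc a b ∧ vf c = y := by
    intro y hy
    set S := {x | x ∈ Icc a b ∧ vf x ≤ y} with hS
    have haS : a ∈ S := ⟨⟨le_rfl, hab.le⟩, by rw [vf0]; exact hy.1⟩
    have hSne : S.Nonempty := ⟨a, haS⟩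
    have hSbd : BddAbove S := ⟨b, fun x hx => hx.1.2⟩
    set c := sSup S with hc
    have hac : a ≤ c := le_csSup hSbd haS
    have hcb : c ≤ b := csSup_le hSne fun x hx => hx.1.2
    refine ⟨c, ⟨hac, hcb⟩, ?_⟩
    rcases lt_trichotomy (vf c) y with h | h | h
    · exfalso
      have hcb' : c < b := by
        rcases eq_or_lt_of_le hcb with hcb0 | h'
        · rw [hcb0] at h; rw [hl] at hy; linarith [hy.2]
        · exact h'
      obtain ⟨t, ht1, ht2, ht3⟩ := variation_right_small hf hBV hac hcb'
        (ε := y - vf c) (by linarith)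
      have hvt : vf t ≤ y := by
        rw [hadd c t hac ht1.le ht2]
        have := ENNReal.toReal_lt_of_lt_ofReal ht3
        linarith
      have : t ≤ c := le_csSup hSbd ⟨⟨hac.trans ht1.le, ht2⟩, hvt⟩
      exact absurd this (not_le.mpr ht1)
    · exact h
    · exfalso
      have hac' : a < c := by
        rcases eq_or_lt_of_le hac with hac0 | h'
        · rw [← hac0, vf0] at h; linarith [hy.1]
        · exact h'
      obtain ⟨s', hs1, hs2, hs3⟩ := variation_left_small hf hBV hac' hcb
        (ε := vf c - y) (by linarith)
      have hvs : y < vf s' := by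
        have h4 := hadd s' c hs1 hs2.le hcb
        have h5 := ENNReal.toReal_lt_of_lt_ofReal hs3
        linarith
      have : c ≤ s' := by
        refine csSup_le hSne fun x hx => ?_
        by_contra hxs
        push_neg at hxs
        have := vmono s' x hs1 hxs.le hx.1.2
        linarith [hx.2]
      exact absurd this (not_le.mpr hs2)
  -- F has unit speed: variation of F on [0, y] is y
  have hFvar : ∀ y ∈ Icc 0 ℓ, eVariationOn F (Icc 0 y) = ENNReal.ofReal y := by
    intro y hy
    obtain ⟨c, hcI, hcy⟩ := hsurj y hy
    have hmonoc : MonotoneOn vf (Icc a c) := fun p hp q hq hpq =>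
      vmono p q hp.1 hpq (hq.2.trans hcI.2)
    have himg : vf '' Icc a c = Icc 0 y := by
      apply Subset.antisymm
      · rintro _ ⟨x, hx, rfl⟩
        exact ⟨vnonneg x ⟨hx.1, hx.2.trans hcI.2⟩, by rw [← hcy]; exact vmono x c hx.1 hx.2 hcI.2⟩
      · intro y' hy'
        obtain ⟨c', hc'I, hc'⟩ := hsurj y' ⟨hy'.1, hy'.2.trans hy.2⟩
        refine ⟨c', ⟨hc'I.1, ?_⟩, hc'⟩
        by_contra hcc
        push_neg at hcc
        have := vstrict c c' hcI.1 hcc hc'I.2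
        rw [hcy, hc'] at this
        linarith [hy'.2]
    have hcomp := eVariationOn.comp_eq_of_monotoneOn F vf hmonoc
    rw [himg] at hcomp
    have hEq : EqOn (F ∘ vf) f (Icc a c) := fun x hx => hF x ⟨hx.1, hx.2.trans hcI.2⟩
    rw [← hcomp, eVariationOn.eq_of_eqOn hEq]
    have h1 : vf c = (eVariationOn f (Icc a c)).toReal := by
      have := hadd a c le_rfl hcI.1 hcI.2
      rw [vf0] at this
      linarith
    rw [← hcy, h1, ENNReal.ofReal_toReal (hfin a c le_rfl hcI.2)]
  -- variation of F on subsegments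
  have hFseg : ∀ p q : ℝ, 0 ≤ p → p ≤ q → q ≤ ℓ →
      eVariationOn F (Icc p q) = ENNReal.ofReal (q - p) := by
    intro p q h1 h2 h3
    have h := eVariationOn.Icc_add_Icc F (a := (0:ℝ)) (b := p) (c := q) h1 h2
      (s := Icc 0 q) ⟨h1, h2⟩
    rw [inter_eq_self_of_subset_right (Icc_subset_Icc le_rfl h2),
      inter_eq_self_of_subset_right (Icc_subset_Icc h1 le_rfl), inter_self] at h
    rw [hFvar p ⟨h1, h2.trans h3⟩, hFvar q ⟨h1.trans h2, h3⟩] at h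
    have h' : ENNReal.ofReal p + ENNReal.ofReal (q - p) = ENNReal.ofReal q := by
      have he : p + (q - p) = q := by ring
      rw [← ENNReal.ofReal_add h1 (by linarith), he]
    rw [← h'] at h
    exact (ENNReal.add_right_inj ENNReal.ofReal_ne_top).mp h
  -- F is 1-Lipschitz on [0, ℓ]
  have hFd : ∀ p q : ℝ, 0 ≤ q → q ≤ p → p ≤ ℓ → ‖F p - F q‖ ≤ p - q := by
    intro p q h1 h2 h3
    have hle : edist (F q) (F p) ≤ ENNReal.ofReal (p - q) := by
      rw [← hFseg q p h1 h2 h3]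
      exact eVariationOn.edist_le F (left_mem_Icc.mpr h2) (right_mem_Icc.mpr h2)
    have h4 := ENNReal.toReal_le_of_le_ofReal (by linarith) hle
    rw [← dist_edist, dist_comm, dist_eq_norm] at h4
    exact h4
  -- upper bound on ‖F'‖
  have hupper : ∀ y ∈ Icc 0 ℓ, ‖F' y‖ ≤ 1 := by
    intro y hy
    refine norm_deriv_le_of_lip hℓpos hy (hF' y hy) ?_
    intro p hp q hq
    rcases le_total q p with h | h
    · rw [one_mul, abs_of_nonneg (by linarith)]
      exact hFd p q hq.1 h hp.2
    · rw [one_mul, abs_of_nonpos (by linarith), norm_sub_rev]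
      have := hFd q p hp.1 h hq.2
      linarith
  -- lower bound by contradiction
  intro y₀ hy₀
  refine le_antisymm (hupper y₀ hy₀) (not_lt.mp fun hlt => ?_)
  set K := (1 + ‖F' y₀‖)/2 with hK
  have hK1 : K < 1 := by rw [hK]; linarith
  have hK0 : 0 ≤ K := by rw [hK]; positivity
  have hKy : ‖F' y₀‖ < K := by rw [hK]; linarith
  have hcw := hF'cont y₀ hy₀
  rw [Metric.continuousWithinAt_iff] at hcw
  obtain ⟨δ, hδpos, hδ⟩ := hcw (K - ‖F' y₀‖) (by linarith)
  set c := max 0 (y₀ - δ/2) with hcdef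
  set d := min ℓ (y₀ + δ/2) with hddef
  have hc0 : 0 ≤ c := le_max_left _ _
  have hdl : d ≤ ℓ := min_le_left _ _
  have hcd : c < d := by
    apply max_lt
    · exact lt_min hℓpos (by linarith [hy₀.1])
    · exact lt_min (by linarith [hy₀.2]) (by linarith)
  have hsubI : Icc c d ⊆ Icc 0 ℓ := Icc_subset_Icc hc0 hdl
  have hbd : ∀ z ∈ Icc c d, ‖F' z‖ ≤ K := by
    intro z hz
    have hzI : z ∈ Icc 0 ℓ := hsubI hz
    have hdist : dist z y₀ < δ := by
      rw [Real.dist_eq, abs_sub_lt_iff]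
      constructor
      · have h5 : d ≤ y₀ + δ/2 := min_le_right _ _
        have := hz.2
        linarith
      · have h5 : y₀ - δ/2 ≤ c := le_max_right _ _
        have := hz.1
        linarith
    have h6 := hδ hzI hdist
    have h7 : ‖F' z‖ ≤ ‖F' y₀‖ + ‖F' z - F' y₀‖ := norm_le_insert' _ _
    rw [dist_eq_norm] at h6
    linarith
  have hlipK : ∀ p ∈ Icc c d, ∀ q ∈ Icc c d, ‖F p - F q‖ ≤ K * ‖p - q‖ := fun p hp q hq =>
    Convex.norm_image_sub_le_of_norm_hasDerivWithin_le
      (fun z hz => (hF' z (hsubI hz)).mono hsubI) hbd (convex_Icc c d) hq hp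
  set Knn : ℝ≥0 := ⟨K, hK0⟩ with hKnn
  have hlipOn : LipschitzOnWith Knn F (Icc c d) := by
    apply LipschitzOnWith.of_dist_le_mul
    intro p hp q hq
    rw [dist_eq_norm, dist_eq_norm]
    exact hlipK p hp q hq
  have hid : eVariationOn id (Icc c d) ≤ ENNReal.ofReal (d - c) := by
    have := MonotoneOn.eVariationOn_le (monotoneOn_id (s := Icc c d))
      (left_mem_Icc.mpr hcd.le) (right_mem_Icc.mpr hcd.le)
    rwa [inter_self] at this
  have hcomp := hlipOn.comp_eVariationOn_le (g := id) (s := Icc c d) (mapsTo_id _)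
  rw [Function.comp_id] at hcomp
  have hfinal : ENNReal.ofReal (d - c) ≤ ENNReal.ofReal (K * (d - c)) := by
    rw [← hFseg c d hc0 hcd.le hdl]
    calc eVariationOn F (Icc c d) ≤ (Knn : ℝ≥0∞) * eVariationOn id (Icc c d) := hcomp
      _ ≤ (Knn : ℝ≥0∞) * ENNReal.ofReal (d - c) := mul_le_mul_right hid _
      _ = ENNReal.ofReal (K * (d - c)) := by
          rw [ENNReal.ofReal_mul hK0, ENNReal.ofReal_eq_coe_nnreal hK0, hKnn]
          rfl
  have hle := (ENNReal.ofReal_le_ofReal_iff (by nlinarith)).mp hfinal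
  nlinarith
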